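/- Let D, E, F be real square matrices with E and F symmetric positive semidefinite, F positive definite, (D,E) stabilizable, and (F,D) detectable. Then the Hamiltonian-type matrix M̃ = [[D, −E],[−F, −Dᵀ]] has no eigenvalue on the imaginary axis. -/

import Mathlib

open Matrix

/-- A real square matrix is stable if all its (complex) eigenvalues have
negative real part. -/
def IsStableMatrix {n : Type} [Fintype n] [DecidableEq n]
    (M : Matrix n n ℝ) : Prop :=
  ∀ z ∈ spectrum ℂ (M.map (algebraMap ℝ ℂ)), z.re < 0

section Aux

open ComplexOrder

set_option linter.unusedSectionVars false

variable {n : Type} [Fintype n] [DecidableEq n]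

lemma aux_mem_spectrum_iff (A : Matrix n n ℂ) (z : ℂ) :
    z ∈ spectrum ℂ A ↔ ∃ v, v ≠ 0 ∧ A *ᵥ v = z • v := by
  rw [spectrum.mem_iff]
  have halg : (algebraMap ℂ (Matrix n n ℂ)) z = z • (1 : Matrix n n ℂ) :=
    Algebra.algebraMap_eq_smul_one z
  constructor
  · intro h
    have hdet : ((algebraMap ℂ (Matrix n n ℂ)) z - A).det = 0 := by
      by_contra hd
      exact h ((Matrix.isUnit_iff_isUnit_det _).2 (isUnit_iff_ne_zero.2 hd))
    obtain ⟨v, hv0, hv⟩ := Matrix.exists_mulVec_eq_zero_iff.2 hdet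
    refine ⟨v, hv0, ?_⟩
    rw [halg, sub_mulVec, smul_mulVec, one_mulVec, sub_eq_zero] at hv
    exact hv.symm
  · rintro ⟨v, hv0, hv⟩ hu
    have hdet := (Matrix.isUnit_iff_isUnit_det _).1 hu
    have h0 : ((algebraMap ℂ (Matrix n n ℂ)) z - A).det = 0 := by
      apply Matrix.exists_mulVec_eq_zero_iff.1
      exact ⟨v, hv0, by rw [halg, sub_mulVec, smul_mulVec, one_mulVec, hv, sub_self]⟩
    rw [h0] at hdet
    exact not_isUnit_zero hdet

lemma aux_mem_spectrum_transpose {A : Matrix n n ℂ} {z : ℂ} :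
    z ∈ spectrum ℂ Aᵀ ↔ z ∈ spectrum ℂ A := by
  rw [spectrum.mem_iff, spectrum.mem_iff]
  have h : (algebraMap ℂ (Matrix n n ℂ)) z - Aᵀ = ((algebraMap ℂ (Matrix n n ℂ)) z - A)ᵀ := by
    simp [Algebra.algebraMap_eq_smul_one, transpose_sub, transpose_smul]
  rw [h, Matrix.isUnit_iff_isUnit_det, Matrix.isUnit_iff_isUnit_det, det_transpose]

lemma aux_posSemidef_map {A : Matrix n n ℝ} (hA : A.PosSemidef) :
    (A.map (algebraMap ℝ ℂ)).PosSemidef := by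
  obtain ⟨B, rfl⟩ : ∃ B : Matrix n n ℝ, A = Bᴴ * B := by
    open MatrixOrder in exact CStarAlgebra.nonneg_iff_eq_star_mul_self.mp hA.nonneg
  have h : (Bᴴ * B).map (algebraMap ℝ ℂ)
      = (B.map (algebraMap ℝ ℂ))ᴴ * B.map (algebraMap ℝ ℂ) := by
    rw [Matrix.map_mul, Matrix.conjTranspose_map]
    intro x
    simp
  rw [h]
  exact posSemidef_conjTranspose_mul_self _

lemma aux_conj_dot (A : Matrix n n ℂ) (x y : n → ℂ) :
    star (star x ⬝ᵥ A *ᵥ y) = star y ⬝ᵥ Aᴴ *ᵥ x := by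
  rw [star_dotProduct, star_star, star_mulVec, ← dotProduct_mulVec]

end Aux

open ComplexOrder in
/-- with E positive semidefinite, F positive definite, (D,E)
stabilizable and (F,D) detectable, the Hamiltonian-type matrix
[[D, −E],[−F, −Dᵀ]] has no eigenvalue on the imaginary axis. -/
theorem stmt19 {n : Type} [Fintype n] [DecidableEq n]
    (D E F : Matrix n n ℝ) (hE : E.PosSemidef) (hF : F.PosDef)
    (hstab : ∃ K : Matrix n n ℝ, IsStableMatrix (D + E * K))
    (hdet : ∃ X : Matrix n n ℝ, IsStableMatrix (X * F + D)) :
    ∀ z ∈ spectrum ℂ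
        ((Matrix.fromBlocks D (-E) (-F) (-Dᵀ)).map (algebraMap ℝ ℂ)),
      z.re ≠ 0 := by
  intro z hz hre
  obtain ⟨K, hK⟩ := hstab
  set Dc := D.map (algebraMap ℝ ℂ) with hDcdef
  set Ec := E.map (algebraMap ℝ ℂ) with hEcdef
  set Fc := F.map (algebraMap ℝ ℂ) with hFcdef
  have hmap : (fromBlocks D (-E) (-F) (-Dᵀ)).map (algebraMap ℝ ℂ)
      = fromBlocks Dc (-Ec) (-Fc) (-(Dcᵀ)) := by
    rw [fromBlocks_map]
    have h1 : (-E).map (algebraMap ℝ ℂ) = -Ec := by ext i j; simp [hEcdef]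
    have h2 : (-F).map (algebraMap ℝ ℂ) = -Fc := by ext i j; simp [hFcdef]
    have h3 : (-Dᵀ).map (algebraMap ℝ ℂ) = -(Dcᵀ) := by
      ext i j; simp [hDcdef]
    rw [h1, h2, h3]
  rw [hmap] at hz
  obtain ⟨v, hv0, hv⟩ := (aux_mem_spectrum_iff _ _).1 hz
  set v₁ : n → ℂ := v ∘ Sum.inl with hv₁def
  set v₂ : n → ℂ := v ∘ Sum.inr with hv₂def
  have hvs : v = Sum.elim v₁ v₂ := by funext i; cases i <;> rfl
  rw [hvs, fromBlocks_mulVec] at hv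
  have eq1 : Dc *ᵥ v₁ - Ec *ᵥ v₂ = z • v₁ := by
    funext i
    have h := congrFun hv (Sum.inl i)
    simpa [neg_mulVec, sub_eq_add_neg] using h
  have eq2 : -(Fc *ᵥ v₁) - Dcᵀ *ᵥ v₂ = z • v₂ := by
    funext i
    have h := congrFun hv (Sum.inr i)
    simpa [neg_mulVec, sub_eq_add_neg] using h
  have hEc : Ec.PosSemidef := aux_posSemidef_map hE
  have hFc : Fc.PosSemidef := aux_posSemidef_map hF.posSemidef
  set a := star v₁ ⬝ᵥ Fc *ᵥ v₁ with hadef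
  set b := star v₂ ⬝ᵥ Ec *ᵥ v₂ with hbdef
  set c := star v₂ ⬝ᵥ Dc *ᵥ v₁ with hcdef
  set d := star v₂ ⬝ᵥ v₁ with hddef
  have hDh : Dcᴴ = Dcᵀ := by
    ext i j
    simp [hDcdef, conjTranspose_apply, Complex.conj_ofReal]
  have hstarc : star v₁ ⬝ᵥ Dcᵀ *ᵥ v₂ = star c := by
    rw [hcdef, aux_conj_dot, hDh]
  have hstard : star v₁ ⬝ᵥ v₂ = star d := by
    rw [hddef, star_dotProduct]
  have h1 : c - b = z * d := by
    have h := congrArg (fun w => star v₂ ⬝ᵥ w) eq1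
    simpa [dotProduct_sub, dotProduct_smul, smul_eq_mul] using h
  have h2 : -a - star c = z * star d := by
    have h := congrArg (fun w => star v₁ ⬝ᵥ w) eq2
    simpa [dotProduct_sub, dotProduct_neg, dotProduct_smul, smul_eq_mul, hstarc, hstard] using h
  have key : (c - b) + (-a - star c) = z * d + z * star d := by rw [h1, h2]
  have keyre := congrArg Complex.re key
  simp only [Complex.add_re, Complex.sub_re, Complex.neg_re, Complex.mul_re,
    Complex.star_def, Complex.conj_re, Complex.conj_im, hre, zero_mul, zero_sub,
    mul_neg, neg_neg] at keyre
  -- keyre : c.re - b.re + (-a.re - c.re) = -(z.im * d.im) + -(z.im * -d.im)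
  have ha0 : (0:ℂ) ≤ a := hFc.dotProduct_mulVec_nonneg v₁
  have hb0 : (0:ℂ) ≤ b := hEc.dotProduct_mulVec_nonneg v₂
  rw [Complex.le_def] at ha0 hb0
  simp only [Complex.zero_re, Complex.zero_im] at ha0 hb0
  have hare : a.re = 0 := by linarith [ha0.1, hb0.1]
  have hbre : b.re = 0 := by linarith [ha0.1, hb0.1]
  have ha : a = 0 := Complex.ext (by simpa using hare) (by simpa using ha0.2.symm)
  have hb : b = 0 := Complex.ext (by simpa using hbre) (by simpa using hb0.2.symm)
  have hFv : Fc *ᵥ v₁ = 0 := (hFc.dotProduct_mulVec_zero_iff v₁).1 ha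
  have hEv : Ec *ᵥ v₂ = 0 := (hEc.dotProduct_mulVec_zero_iff v₂).1 hb
  have hv₁ : v₁ = 0 := by
    by_contra h
    have hd0 : Fc.det = 0 := Matrix.exists_mulVec_eq_zero_iff.1 ⟨v₁, h, hFv⟩
    have hd0' : (algebraMap ℝ ℂ) F.det = 0 := by rw [RingHom.map_det]; exact hd0
    have : F.det = 0 := by simpa using hd0'
    exact hF.det_pos.ne' this
  have hv₂ : v₂ ≠ 0 := by
    intro h
    apply hv0
    rw [hvs, hv₁, h]
    funext i; cases i <;> rfl
  have hDT : Dcᵀ *ᵥ v₂ = (-z) • v₂ := by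
    have := eq2
    rw [hv₁, mulVec_zero, neg_zero, zero_sub] at this
    rw [← neg_neg (Dcᵀ *ᵥ v₂), this, neg_smul]
  have hET : Eᵀ = E := (by simpa using hE.1 : E.IsSymm)
  have hAT : ((D + E * K).map (algebraMap ℝ ℂ))ᵀ *ᵥ v₂ = (-z) • v₂ := by
    have hEcT : Ecᵀ = Ec := by rw [hEcdef, ← transpose_map, hET]
    have hEq : ((D + E * K).map (algebraMap ℝ ℂ))ᵀ
        = Dcᵀ + (Kᵀ.map (algebraMap ℝ ℂ)) * Ec := by
      have hm : (D + E * K).map (algebraMap ℝ ℂ) = Dc + Ec * K.map (algebraMap ℝ ℂ) := by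
        rw [Matrix.map_add _ (map_add _), Matrix.map_mul]
      rw [hm, transpose_add, transpose_mul, hEcT, transpose_map]
    rw [hEq, add_mulVec, ← mulVec_mulVec, hEv, mulVec_zero, add_zero, hDT]
  have hmem : (-z) ∈ spectrum ℂ ((D + E * K).map (algebraMap ℝ ℂ)) := by
    rw [← aux_mem_spectrum_transpose, aux_mem_spectrum_iff]
    exact ⟨v₂, hv₂, hAT⟩
  have := hK (-z) hmem
  rw [Complex.neg_re, hre] at this
  exact lt_irrefl 0 (by simpa using this)
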